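/- Let M be a nonnegative irreducible real n×n matrix admitting an equitable partition Π of {1,…,n}, and let X be the Perron vector of M (a positive eigenvector associated with the spectral radius of M). Then the entries of X are constant on each cell of the partition Π. -/

import Mathlib

open Matrix

/-- The cell (clique index) of a vertex of the join-of-cliques graph:
`none` for vertices of the central `K_s`, `some i` for vertices of `K_{parts i}`. -/
def cellOf {s t : ℕ} {parts : Fin t → ℕ} :
    (Fin s ⊕ (Σ i : Fin t, Fin (parts i))) → Option (Fin t)
  | Sum.inl _ => none
  | Sum.inr ⟨i, _⟩ => some i

/-- The graph `K_s ∨ (K_{parts 0} ∪ K_{parts 1} ∪ ⋯ ∪ K_{parts (t-1)})`. -/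
def cliqueJoin (s : ℕ) {t : ℕ} (parts : Fin t → ℕ) :
    SimpleGraph (Fin s ⊕ (Σ i : Fin t, Fin (parts i))) where
  Adj x y := x ≠ y ∧ (cellOf x = none ∨ cellOf y = none ∨ cellOf x = cellOf y)
  symm := by constructor; rintro x y ⟨h1, h2⟩; exact ⟨h1.symm, by tauto⟩
  loopless := by constructor; rintro x ⟨h1, -⟩; exact h1 rfl

/-- The `A_α`-matrix `A_α(G) = α D(G) + (1-α) A(G)`. -/
noncomputable def Aalpha {V : Type*} [Fintype V] (α : ℝ) (G : SimpleGraph V) :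
    Matrix V V ℝ :=
  letI := Classical.decEq V
  letI := Classical.decRel G.Adj
  α • Matrix.diagonal (fun v => (G.degree v : ℝ)) + (1 - α) • (G.adjMatrix ℝ)

/-- The largest real eigenvalue of a real matrix (for a real symmetric matrix,
this is its largest eigenvalue). -/
noncomputable def specRad {V : Type*} [Fintype V] (M : Matrix V V ℝ) : ℝ :=
  letI := Classical.decEq V
  sSup (spectrum ℝ M)

/-- The `A_α`-spectral radius of a graph. -/
noncomputable def rhoAlpha {V : Type*} [Fintype V] (α : ℝ) (G : SimpleGraph V) : ℝ :=
  specRad (Aalpha α G)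

/-- `G` has an even factor: a spanning subgraph in which every vertex has positive
even degree. -/
def HasEvenFactor {V : Type*} [Fintype V] (G : SimpleGraph V) : Prop :=
  ∃ H : SimpleGraph V, H ≤ G ∧
    ∀ v : V, 0 < (H.neighborSet v).ncard ∧ Even ((H.neighborSet v).ncard)

/-- The spectral radius of a real matrix: the maximum modulus of its complex
eigenvalues. -/
noncomputable def cSpecRad {m : Type*} [Fintype m] (M : Matrix m m ℝ) : ℝ :=
  letI := Classical.decEq m
  sSup ((norm : ℂ → ℝ) '' spectrum ℂ (M.map (fun r => (r : ℂ))))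

/-- A matrix is irreducible. -/
def MatIrreducible {m : Type*} [Fintype m] [DecidableEq m] (M : Matrix m m ℝ) : Prop :=
  ∀ i j, ∃ k : ℕ, 0 < (M ^ k) i j

theorem perronVector_constant_on_cells
    (n k : ℕ) (M : Matrix (Fin n) (Fin n) ℝ)
    (hM : ∀ i j, 0 ≤ M i j) (hirr : MatIrreducible M)
    (π : Fin n → Fin k) (hπ : Function.Surjective π)
    (hequit : ∀ (x y : Fin n) (j : Fin k), π x = π y →
      ∑ z ∈ Finset.univ.filter (fun z => π z = j), M x z =
      ∑ z ∈ Finset.univ.filter (fun z => π z = j), M y z)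
    (X : Fin n → ℝ) (hX : ∀ i, 0 < X i)
    (hEig : M.mulVec X = cSpecRad M • X) :
    ∀ x y : Fin n, π x = π y → X x = X y := by
  classical
  intro x y hxy
  set ρ := cSpecRad M with hρdef
  have hEig' : ∀ i, M.mulVec X i = ρ * X i := by
    intro i; rw [hEig]; simp
  have hfib : ∀ a : Fin k, (Finset.univ.filter (fun z => π z = a)).Nonempty := by
    intro a; obtain ⟨z, hz⟩ := hπ a; exact ⟨z, by simp [hz]⟩
  set w : Fin k → ℝ := fun a => (Finset.univ.filter (fun z => π z = a)).inf' (hfib a) X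
    with hwdef
  set W : Fin n → ℝ := fun i => w (π i) with hWdef
  have hWX : ∀ i, W i ≤ X i := fun i => Finset.inf'_le _ (by simp)
  have hach : ∀ a : Fin k, ∃ j, π j = a ∧ X j = w a := by
    intro a
    obtain ⟨j, hj, hje⟩ := Finset.exists_mem_eq_inf' (hfib a) X
    exact ⟨j, by simpa using hj, hje.symm⟩
  have hWpos : ∀ i, 0 < W i := by
    intro i
    obtain ⟨j, _, hje⟩ := hach (π i)
    rw [hWdef]; simp only; rw [← hje]; exact hX j
  -- M · W is constant on cells
  have key : ∀ i, M.mulVec W i =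
      ∑ a : Fin k, (∑ z ∈ Finset.univ.filter (fun z => π z = a), M i z) * w a := by
    intro i
    have h1 := Finset.sum_fiberwise_of_maps_to (s := (Finset.univ : Finset (Fin n)))
      (g := π) (t := (Finset.univ : Finset (Fin k)))
      (fun j _ => Finset.mem_univ (π j)) (fun j => M i j * W j)
    rw [Matrix.mulVec, dotProduct, ← h1]
    refine Finset.sum_congr rfl fun a _ => ?_
    rw [Finset.sum_mul]
    refine Finset.sum_congr rfl fun j hj => ?_
    have hja : π j = a := by simpa using (Finset.mem_filter.1 hj).2
    rw [hWdef]; simp [hja]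
  have hMW : ∀ i i', π i = π i' → M.mulVec W i = M.mulVec W i' := by
    intro i i' h
    rw [key i, key i']
    exact Finset.sum_congr rfl fun a _ => by rw [hequit i i' a h]
  -- M · W ≤ ρ · W
  have hMle : ∀ i, M.mulVec W i ≤ ρ * W i := by
    intro i
    obtain ⟨j, hj, hje⟩ := hach (π i)
    have h1 : M.mulVec W i = M.mulVec W j := hMW i j hj.symm
    have h2 : M.mulVec W j ≤ M.mulVec X j := by
      rw [Matrix.mulVec, Matrix.mulVec, dotProduct, dotProduct]
      exact Finset.sum_le_sum fun l _ => mul_le_mul_of_nonneg_left (hWX l) (hM j l)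
    have h3 : X j = W i := by rw [hWdef]; simpa using hje
    rw [h1, ← h3]
    calc M.mulVec W j ≤ M.mulVec X j := h2
      _ = ρ * X j := hEig' j
  -- the max ratio c
  have hne : (Finset.univ : Finset (Fin n)).Nonempty := ⟨x, Finset.mem_univ x⟩
  set c : ℝ := Finset.univ.sup' hne (fun i => X i / W i) with hcdef
  have hcge' : ∀ i, X i / W i ≤ c := by
    intro i
    have h := Finset.le_sup' (fun i => X i / W i) (Finset.mem_univ i)
    rw [← hcdef] at h
    exact h
  have hcge : ∀ i, X i ≤ c * W i := by
    intro i
    have h := (div_le_iff₀ (hWpos i)).1 (hcge' i)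
    linarith
  have hcpos : 0 < c :=
    lt_of_lt_of_le (div_pos (hX x) (hWpos x)) (hcge' x)
  obtain ⟨i0, _, hi0⟩ := Finset.exists_mem_eq_sup' hne (fun i => X i / W i)
  set U : Fin n → ℝ := fun i => c * W i - X i with hUdef
  have hU0 : ∀ i, 0 ≤ U i := fun i => sub_nonneg.2 (hcge i)
  have hUi0 : U i0 = 0 := by
    have : c * W i0 = X i0 := by
      rw [hcdef, hi0, div_mul_cancel₀ _ (hWpos i0).ne']
    simp [hUdef, this]
  have hMU : ∀ i, M.mulVec U i ≤ ρ * U i := by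
    intro i
    have h1 : M.mulVec U i = c * M.mulVec W i - M.mulVec X i := by
      simp only [Matrix.mulVec, dotProduct, hUdef]
      rw [Finset.mul_sum, ← Finset.sum_sub_distrib]
      exact Finset.sum_congr rfl fun l _ => by ring
    rw [h1, hEig' i]
    have : c * M.mulVec W i ≤ c * (ρ * W i) :=
      mul_le_mul_of_nonneg_left (hMle i) hcpos.le
    calc c * M.mulVec W i - ρ * X i ≤ c * (ρ * W i) - ρ * X i := by linarith
      _ = ρ * U i := by simp [hUdef]; ring
  -- zero propagation
  have hstep : ∀ i, U i = 0 → ∀ j, 0 < M i j → U j = 0 := by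
    intro i hi j hij
    have h1 : ∑ l, M i l * U l ≤ 0 := by
      have := hMU i
      rwa [Matrix.mulVec, dotProduct, hi, mul_zero] at this
    have h2 : ∀ l ∈ Finset.univ, 0 ≤ M i l * U l :=
      fun l _ => mul_nonneg (hM i l) (hU0 l)
    have h3 : ∑ l, M i l * U l = 0 :=
      le_antisymm h1 (Finset.sum_nonneg h2)
    have h4 := (Finset.sum_eq_zero_iff_of_nonneg h2).1 h3 j (Finset.mem_univ j)
    rcases mul_eq_zero.1 h4 with h | h
    · exact absurd h hij.ne'
    · exact h
  have hpow : ∀ m (i j : Fin n), 0 ≤ (M ^ m) i j := by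
    intro m
    induction m with
    | zero => intro i j; rw [pow_zero]; by_cases h : i = j <;> simp [Matrix.one_apply, h]
    | succ m ih =>
      intro i j
      rw [pow_succ, Matrix.mul_apply]
      exact Finset.sum_nonneg fun l _ => mul_nonneg (ih i l) (hM l j)
  have hprop : ∀ m (i j : Fin n), U i = 0 → 0 < (M ^ m) i j → U j = 0 := by
    intro m
    induction m with
    | zero =>
      intro i j hi hij
      rw [pow_zero, Matrix.one_apply] at hij
      by_cases h : i = j
      · exact h ▸ hi
      · simp [h] at hij
    | succ m ih =>
      intro i j hi hij
      rw [pow_succ', Matrix.mul_apply] at hij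
      obtain ⟨l, -, hl⟩ := Finset.exists_lt_of_sum_lt (by simpa using hij :
        ∑ l : Fin n, (0:ℝ) < ∑ l, M i l * (M ^ m) l j)
      have hMil : 0 < M i l := by
        rcases (hM i l).lt_or_eq with h | h
        · exact h
        · rw [← h, zero_mul] at hl; exact absurd hl (lt_irrefl 0)
      have hMm : 0 < (M ^ m) l j := by
        rcases (hpow m l j).lt_or_eq with h | h
        · exact h
        · rw [← h, mul_zero] at hl; exact absurd hl (lt_irrefl 0)
      exact ih l j (hstep i hi l hMil) hMm
  have hUzero : ∀ j, U j = 0 := by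
    intro j
    obtain ⟨m, hm⟩ := hirr i0 j
    exact hprop m i0 j hUi0 hm
  -- conclude c = 1
  have hc1 : c = 1 := by
    obtain ⟨j, hj, hje⟩ := hach (π x)
    have h1 : X j = W j := by rw [hWdef]; simp only; rw [hj]; exact hje
    have h2 : c * W j - X j = 0 := hUzero j
    have := hWpos j
    nlinarith [h1, h2]
  have hx' : X x = W x := by
    have h : c * W x - X x = 0 := hUzero x
    rw [hc1] at h; linarith
  have hy' : X y = W y := by
    have h : c * W y - X y = 0 := hUzero y
    rw [hc1] at h; linarith
  rw [hx', hy', hWdef]; simp [hxy]
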